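/- Let T be a tree on a finite vertex set V and let a,b,c,d be four pairwise distinct vertices with ab, cd ∈ E(T) and ac, bd ∉ E(T). Then the 2-switch of T at (a,b;c,d) is a tree if and only if either both edges ab and cd lie on the unique path in T from a to d, or both edges ab and cd lie on the unique path in T from b to c. -/

import Mathlib

open SimpleGraph

/-- Four pairwise distinct vertices `a,b,c,d` with `ab, cd ∈ E(G)` and `ac, bd ∉ E(G)`:
the condition under which the 2-switch of `G` at `(a,b;c,d)` is performed. -/
def Switchable {V : Type*} (G : SimpleGraph V) (a b c d : V) : Prop :=
  a ≠ b ∧ a ≠ c ∧ a ≠ d ∧ b ≠ c ∧ b ≠ d ∧ c ≠ d ∧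
    G.Adj a b ∧ G.Adj c d ∧ ¬ G.Adj a c ∧ ¬ G.Adj b d

/-- The 2-switch of `G` at `(a,b;c,d)`: the graph on `V` with edge set
`(E(G) \ {ab, cd}) ∪ {ac, bd}`. -/
def twoSwitch {V : Type*} (G : SimpleGraph V) (a b c d : V) : SimpleGraph V :=
  SimpleGraph.fromEdgeSet ((G.edgeSet \ {s(a, b), s(c, d)}) ∪ {s(a, c), s(b, d)})

/-- `G'` is obtained from `G` by a 2-switch. -/
def ObtainedByTwoSwitch {V : Type*} (G G' : SimpleGraph V) : Prop :=
  ∃ a b c d : V, Switchable G a b c d ∧ G' = twoSwitch G a b c d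

namespace TwoSwitchAux

open SimpleGraph Walk

variable {V : Type*}

lemma reach_invar {G : SimpleGraph V} (P : V → Prop)
    (hP : ∀ ⦃x y : V⦄, G.Adj x y → (P x ↔ P y)) {u v : V} (h : G.Reachable u v) :
    P u ↔ P v := by
  obtain ⟨w⟩ := h
  induction w with
  | nil => exact Iff.rfl
  | cons h p ih => exact (hP h).trans ih

lemma reach_del_iff {G : SimpleGraph V} (s : Set (Sym2 V)) {u v : V} :
    (G.deleteEdges s).Reachable u v ↔
      ∃ p : G.Walk u v, p.IsPath ∧ ∀ e ∈ p.edges, e ∉ s := by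
  classical
  constructor
  · rintro ⟨w⟩
    have hp := w.bypass_isPath
    have hsub : ∀ e ∈ w.bypass.edges, e ∈ G.edgeSet ∧ e ∉ s := by
      intro e he
      have := w.bypass.edges_subset_edgeSet he
      rw [edgeSet_deleteEdges] at this
      exact this
    refine ⟨w.bypass.transfer G (fun e he => (hsub e he).1), hp.transfer _, ?_⟩
    intro e he
    rw [edges_transfer] at he
    exact (hsub e he).2
  · rintro ⟨p, _, hp⟩
    exact ⟨p.toDeleteEdges s hp⟩

lemma path_eq {G : SimpleGraph V} (hG : G.IsAcyclic) {u v : V} {p q : G.Walk u v}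
    (hp : p.IsPath) (hq : q.IsPath) : p = q :=
  congrArg Subtype.val (hG.path_unique ⟨p, hp⟩ ⟨q, hq⟩)

lemma dichotomy {G : SimpleGraph V} (hc : G.Preconnected) (a b x : V) :
    (G.deleteEdges {s(a, b)}).Reachable a x ∨ (G.deleteEdges {s(a, b)}).Reachable b x := by
  have key : ∀ ⦃u w : V⦄, G.Adj u w →
      (((G.deleteEdges {s(a, b)}).Reachable a u ∨ (G.deleteEdges {s(a, b)}).Reachable b u) ↔
       ((G.deleteEdges {s(a, b)}).Reachable a w ∨ (G.deleteEdges {s(a, b)}).Reachable b w)) := by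
    intro u w huw
    by_cases he : s(u, w) = s(a, b)
    · rcases Sym2.eq_iff.mp he with ⟨rfl, rfl⟩ | ⟨rfl, rfl⟩
      · exact iff_of_true (Or.inl (Reachable.refl _)) (Or.inr (Reachable.refl _))
      · exact iff_of_true (Or.inr (Reachable.refl _)) (Or.inl (Reachable.refl _))
    · have hadj : (G.deleteEdges {s(a, b)}).Adj u w := by
        rw [deleteEdges_adj]
        exact ⟨huw, by simpa using he⟩
      exact ⟨fun h => h.imp (·.trans hadj.reachable) (·.trans hadj.reachable),
             fun h => h.imp (·.trans hadj.symm.reachable) (·.trans hadj.symm.reachable)⟩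
  exact (reach_invar _ key (hc a x)).mp (Or.inl (Reachable.refl _))

lemma decomp {G : SimpleGraph V} {a b c d : V} (hcd : G.Adj c d)
    (hne : s(c, d) ≠ s(a, b))
    (hncd : ¬(G.deleteEdges {s(a, b), s(c, d)}).Reachable c d) (x y : V) :
    (G.deleteEdges {s(a, b)}).Reachable x y ↔
      ((G.deleteEdges {s(a, b), s(c, d)}).Reachable x y ∨
       ((G.deleteEdges {s(a, b), s(c, d)}).Reachable x c ∧
        (G.deleteEdges {s(a, b), s(c, d)}).Reachable d y) ∨
       ((G.deleteEdges {s(a, b), s(c, d)}).Reachable x d ∧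
        (G.deleteEdges {s(a, b), s(c, d)}).Reachable c y)) := by
  set H := G.deleteEdges {s(a, b), s(c, d)} with hH
  have hle : H ≤ G.deleteEdges {s(a, b)} := by
    intro u w h
    rw [hH, deleteEdges_adj] at h
    rw [deleteEdges_adj]
    exact ⟨h.1, fun hm => h.2 (by simp at hm ⊢; exact Or.inl hm)⟩
  constructor
  · intro h
    have key : ∀ ⦃u w : V⦄, (G.deleteEdges {s(a, b)}).Adj u w →
        ((H.Reachable x u ∨ (H.Reachable x c ∧ H.Reachable d u) ∨
          (H.Reachable x d ∧ H.Reachable c u)) ↔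
         (H.Reachable x w ∨ (H.Reachable x c ∧ H.Reachable d w) ∨
          (H.Reachable x d ∧ H.Reachable c w))) := by
      intro u w huw
      rw [deleteEdges_adj] at huw
      by_cases he : s(u, w) = s(c, d)
      · have hPcd : (H.Reachable x c ∨ (H.Reachable x c ∧ H.Reachable d c) ∨
            (H.Reachable x d ∧ H.Reachable c c)) ↔
            (H.Reachable x d ∨ (H.Reachable x c ∧ H.Reachable d d) ∨
             (H.Reachable x d ∧ H.Reachable c d)) := by
          constructor
          · rintro (h | ⟨h1, h2⟩ | ⟨h1, h2⟩)
            · exact Or.inr (Or.inl ⟨h, Reachable.refl _⟩)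
            · exact absurd h2.symm hncd
            · exact Or.inl h1
          · rintro (h | ⟨h1, h2⟩ | ⟨h1, h2⟩)
            · exact Or.inr (Or.inr ⟨h, Reachable.refl _⟩)
            · exact Or.inl h1
            · exact absurd h2 hncd
        rcases Sym2.eq_iff.mp he with ⟨rfl, rfl⟩ | ⟨rfl, rfl⟩
        · exact hPcd
        · exact hPcd.symm
      · have hadj : H.Adj u w := by
          rw [hH, deleteEdges_adj]
          refine ⟨huw.1, ?_⟩
          intro hm
          simp only [Set.mem_insert_iff, Set.mem_singleton_iff] at hm
          rcases hm with hm | hm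
          · exact huw.2 (by simp [hm])
          · exact he hm
        have step : ∀ {u w : V}, H.Adj u w →
            (H.Reachable x u ∨ (H.Reachable x c ∧ H.Reachable d u) ∨
             (H.Reachable x d ∧ H.Reachable c u)) →
            (H.Reachable x w ∨ (H.Reachable x c ∧ H.Reachable d w) ∨
             (H.Reachable x d ∧ H.Reachable c w)) := by
          rintro u w ha (h | ⟨h1, h2⟩ | ⟨h1, h2⟩)
          · exact Or.inl (h.trans ha.reachable)
          · exact Or.inr (Or.inl ⟨h1, h2.trans ha.reachable⟩)
          · exact Or.inr (Or.inr ⟨h1, h2.trans ha.reachable⟩)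
        exact ⟨step hadj, step hadj.symm⟩
    exact (reach_invar _ key h).mp (Or.inl (Reachable.refl _))
  · have hcd' : (G.deleteEdges {s(a, b)}).Adj c d := by
      rw [deleteEdges_adj]
      exact ⟨hcd, by simpa using hne⟩
    rintro (h | ⟨h1, h2⟩ | ⟨h1, h2⟩)
    · exact h.mono hle
    · exact ((h1.mono hle).trans hcd'.reachable).trans (h2.mono hle)
    · exact ((h1.mono hle).trans hcd'.symm.reachable).trans (h2.mono hle)


lemma card_le_of_preconnected [Fintype V] [Nonempty V] (G : SimpleGraph V)
    [Fintype G.edgeSet] (hc : G.Preconnected) :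
    Fintype.card V ≤ G.edgeFinset.card + 1 := by
  classical
  obtain ⟨root⟩ : Nonempty V := inferInstance
  have key : ∀ v : V, v ≠ root → ∃ w : V, G.Adj v w ∧ G.dist w root + 1 = G.dist v root := by
    intro v hv
    obtain ⟨p, hp⟩ := (hc v root).exists_walk_length_eq_dist
    cases p with
    | nil => exact absurd rfl hv
    | @cons _ w _ hadj q =>
      refine ⟨w, hadj, ?_⟩
      have h1 : G.dist w root ≤ q.length := dist_le q
      obtain ⟨p', hp'⟩ := (hc w root).exists_walk_length_eq_dist
      have h2 : G.dist v root ≤ G.dist w root + 1 := by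
        have := dist_le (Walk.cons hadj p')
        rwa [Walk.length_cons, hp'] at this
      rw [Walk.length_cons] at hp
      omega
  choose nxt hadj hdist using key
  have hinj : ∀ v ∈ ({root}ᶜ : Finset V), ∀ w ∈ ({root}ᶜ : Finset V),
      (fun v => if h : v = root then s(v, v) else s(v, nxt v h)) v =
      (fun v => if h : v = root then s(v, v) else s(v, nxt v h)) w → v = w := by
    intro v hv w hw hvw
    simp only [Finset.mem_compl, Finset.mem_singleton] at hv hw
    simp only [dif_neg hv, dif_neg hw, Sym2.eq_iff] at hvw
    rcases hvw with ⟨h1, _⟩ | ⟨h1, h2⟩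
    · exact h1
    · have d1 := hdist v hv
      have d2 := hdist w hw
      rw [← h1] at d2
      rw [h2] at d1
      omega
  have hmaps : ∀ v ∈ ({root}ᶜ : Finset V),
      (fun v => if h : v = root then s(v, v) else s(v, nxt v h)) v ∈ G.edgeFinset := by
    intro v hv
    simp only [Finset.mem_compl, Finset.mem_singleton] at hv
    simp only [dif_neg hv, mem_edgeFinset, SimpleGraph.mem_edgeSet]
    exact hadj v hv
  have hle := Finset.card_le_card_of_injOn _ hmaps hinj
  rw [Finset.card_compl, Finset.card_singleton] at hle
  have := Fintype.card_pos (α := V)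
  omega

lemma connected_deleteEdges_of_not_bridge {G : SimpleGraph V} (hc : G.Connected)
    {v w : V} (hr : (G.deleteEdges {s(v, w)}).Reachable v w) :
    (G.deleteEdges {s(v, w)}).Connected := by
  haveI : Nonempty V := hc.nonempty
  refine Connected.mk fun x y => ?_
  have key : ∀ ⦃u z : V⦄, G.Adj u z →
      ((G.deleteEdges {s(v, w)}).Reachable x u ↔ (G.deleteEdges {s(v, w)}).Reachable x z) := by
    intro u z huz
    by_cases he : s(u, z) = s(v, w)
    · rcases Sym2.eq_iff.mp he with ⟨rfl, rfl⟩ | ⟨rfl, rfl⟩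
      · exact ⟨fun h => h.trans hr, fun h => h.trans hr.symm⟩
      · exact ⟨fun h => h.trans hr.symm, fun h => h.trans hr⟩
    · have hadj : (G.deleteEdges {s(v, w)}).Adj u z := by
        rw [deleteEdges_adj]; exact ⟨huz, by simpa using he⟩
      exact ⟨fun h => h.trans hadj.reachable, fun h => h.trans hadj.symm.reachable⟩
  exact (reach_invar _ key (hc.preconnected x y)).mp (Reachable.refl _)

lemma isTree_of_connected_of_card [Fintype V] (G : SimpleGraph V) [Fintype G.edgeSet]
    (hc : G.Connected) (hcard : G.edgeFinset.card + 1 = Fintype.card V) : G.IsTree := by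
  classical
  refine ⟨hc, ?_⟩
  by_contra hcyc
  rw [IsAcyclic] at hcyc
  push_neg at hcyc
  obtain ⟨v, c, hcycle⟩ := hcyc
  cases c with
  | nil => exact hcycle.ne_nil rfl
  | @cons _ w _ hadj q =>
    have hmem : s(v, w) ∈ (Walk.cons hadj q).edges := by simp
    have hnb : ¬G.IsBridge s(v, w) := by
      intro hb
      exact ((isBridge_iff_forall_cycle_notMem hadj).mp hb) _ hcycle hmem
    rw [isBridge_iff] at hnb
    push_neg at hnb
    have hr : (G.deleteEdges {s(v, w)}).Reachable v w := hnb
    have hconn' := connected_deleteEdges_of_not_bridge hc hr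
    haveI : Nonempty V := hc.nonempty
    haveI : Fintype (G.deleteEdges {s(v, w)}).edgeSet := (Set.toFinite _).fintype
    have hle := card_le_of_preconnected (G.deleteEdges {s(v, w)}) hconn'.preconnected
    have hef : (G.deleteEdges {s(v, w)}).edgeFinset = G.edgeFinset.erase s(v, w) := by
      ext e
      simp only [mem_edgeFinset, edgeSet_deleteEdges, Set.mem_diff, Set.mem_singleton_iff,
        Finset.mem_erase]
      tauto
    rw [hef, Finset.card_erase_of_mem (by rw [mem_edgeFinset]; exact hadj)] at hle
    have h1 : 1 ≤ G.edgeFinset.card := Finset.card_pos.mpr ⟨s(v, w), by rw [mem_edgeFinset]; exact hadj⟩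
    omega


end TwoSwitchAux

open TwoSwitchAux in
/-- a 2-switch of a tree is a tree iff both switched edges lie on the
unique path from `a` to `d`, or both lie on the unique path from `b` to `c`. -/
theorem stmt_1 {V : Type*} [Fintype V] (T : SimpleGraph V) (hT : T.IsTree)
    (a b c d : V) (h : Switchable T a b c d) :
    (twoSwitch T a b c d).IsTree ↔
      (∃ p : T.Walk a d, p.IsPath ∧ s(a, b) ∈ p.edges ∧ s(c, d) ∈ p.edges) ∨
      (∃ p : T.Walk b c, p.IsPath ∧ s(a, b) ∈ p.edges ∧ s(c, d) ∈ p.edges) := by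
  classical
  obtain ⟨hab, hac, had, hbc, hbd, hcd, hAB, hCD, hnAC, hnBD⟩ := h
  have hconn := hT.isConnected
  have hpre := hconn.preconnected
  have hacyc := hT.IsAcyclic
  set H := T.deleteEdges {s(a, b), s(c, d)} with hH
  set G2 := twoSwitch T a b c d with hG2
  -- distinctness of the four relevant edges
  have hne12 : s(a, b) ≠ s(c, d) := by
    intro h'
    rcases Sym2.eq_iff.mp h' with ⟨h1, _⟩ | ⟨h1, _⟩
    exacts [hac h1, had h1]
  have hne34 : s(a, c) ≠ s(b, d) := by
    intro h'
    rcases Sym2.eq_iff.mp h' with ⟨h1, _⟩ | ⟨h1, _⟩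
    exacts [hab h1, had h1]
  -- H is below both single-edge deletions
  have hle1 : H ≤ T.deleteEdges {s(a, b)} := by
    intro u w hw
    rw [hH, deleteEdges_adj] at hw
    rw [deleteEdges_adj]
    refine ⟨hw.1, fun hm => hw.2 ?_⟩
    rw [Set.mem_singleton_iff] at hm
    simp [hm]
  have hle2 : H ≤ T.deleteEdges {s(c, d)} := by
    intro u w hw
    rw [hH, deleteEdges_adj] at hw
    rw [deleteEdges_adj]
    refine ⟨hw.1, fun hm => hw.2 ?_⟩
    rw [Set.mem_singleton_iff] at hm
    simp [hm]
  -- bridges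
  have hbr1 : ¬(T.deleteEdges {s(a, b)}).Reachable a b := by
    have hb : T.IsBridge s(a, b) := isAcyclic_iff_forall_adj_isBridge.mp hacyc hAB
    rw [isBridge_iff] at hb
    exact hb
  have hbr2 : ¬(T.deleteEdges {s(c, d)}).Reachable c d := by
    have hb : T.IsBridge s(c, d) := isAcyclic_iff_forall_adj_isBridge.mp hacyc hCD
    rw [isBridge_iff] at hb
    exact hb
  have hnRab : ¬H.Reachable a b := fun hr => hbr1 (hr.mono hle1)
  have hnRcd : ¬H.Reachable c d := fun hr => hbr2 (hr.mono hle2)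
  -- decompositions
  have hd1 : ∀ x y : V, (T.deleteEdges {s(a, b)}).Reachable x y ↔
      (H.Reachable x y ∨ (H.Reachable x c ∧ H.Reachable d y) ∨
       (H.Reachable x d ∧ H.Reachable c y)) := fun x y =>
    decomp hCD hne12.symm hnRcd x y
  have hpair : ({s(c, d), s(a, b)} : Set (Sym2 V)) = {s(a, b), s(c, d)} := Set.pair_comm _ _
  have hd2 : ∀ x y : V, (T.deleteEdges {s(c, d)}).Reachable x y ↔
      (H.Reachable x y ∨ (H.Reachable x a ∧ H.Reachable b y) ∨
       (H.Reachable x b ∧ H.Reachable a y)) := by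
    intro x y
    have := decomp hAB hne12 (by rw [hpair]; exact hnRab) x y
    rwa [hpair] at this
  -- the four separation facts
  have F1 : ¬(T.deleteEdges {s(a, b)}).Reachable a d ↔
      (¬H.Reachable a d ∧ ¬H.Reachable a c) := by
    constructor
    · intro hn
      exact ⟨fun hh => hn ((hd1 a d).mpr (Or.inl hh)),
             fun hh => hn ((hd1 a d).mpr (Or.inr (Or.inl ⟨hh, Reachable.refl _⟩)))⟩
    · rintro ⟨n1, n2⟩ hr
      rcases (hd1 a d).mp hr with hh | ⟨h1, h2⟩ | ⟨h1, h2⟩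
      exacts [n1 hh, n2 h1, n1 h1]
  have F2 : ¬(T.deleteEdges {s(c, d)}).Reachable a d ↔
      (¬H.Reachable a d ∧ ¬H.Reachable b d) := by
    constructor
    · intro hn
      exact ⟨fun hh => hn ((hd2 a d).mpr (Or.inl hh)),
             fun hh => hn ((hd2 a d).mpr (Or.inr (Or.inl ⟨Reachable.refl _, hh⟩)))⟩
    · rintro ⟨n1, n2⟩ hr
      rcases (hd2 a d).mp hr with hh | ⟨h1, h2⟩ | ⟨h1, h2⟩
      exacts [n1 hh, n2 h2, absurd h1 hnRab]
  have F3 : ¬(T.deleteEdges {s(a, b)}).Reachable b c ↔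
      (¬H.Reachable b c ∧ ¬H.Reachable b d) := by
    constructor
    · intro hn
      exact ⟨fun hh => hn ((hd1 b c).mpr (Or.inl hh)),
             fun hh => hn ((hd1 b c).mpr (Or.inr (Or.inr ⟨hh, Reachable.refl _⟩)))⟩
    · rintro ⟨n1, n2⟩ hr
      rcases (hd1 b c).mp hr with hh | ⟨h1, h2⟩ | ⟨h1, h2⟩
      exacts [n1 hh, n1 h1, n2 h1]
  have F4 : ¬(T.deleteEdges {s(c, d)}).Reachable b c ↔
      (¬H.Reachable b c ∧ ¬H.Reachable a c) := by
    constructor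
    · intro hn
      exact ⟨fun hh => hn ((hd2 b c).mpr (Or.inl hh)),
             fun hh => hn ((hd2 b c).mpr (Or.inr (Or.inr ⟨Reachable.refl _, hh⟩)))⟩
    · rintro ⟨n1, n2⟩ hr
      rcases (hd2 b c).mp hr with hh | ⟨h1, h2⟩ | ⟨h1, h2⟩
      exacts [n1 hh, n1 h2, n2 h2]
  -- path membership characterizations
  have hsep1 : (∃ p : T.Walk a d, p.IsPath ∧ s(a, b) ∈ p.edges ∧ s(c, d) ∈ p.edges) ↔
      (¬(T.deleteEdges {s(a, b)}).Reachable a d ∧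
       ¬(T.deleteEdges {s(c, d)}).Reachable a d) := by
    constructor
    · rintro ⟨p, hp, h1, h2⟩
      constructor
      · intro hr
        obtain ⟨q, hq, hqe⟩ := (reach_del_iff _).mp hr
        have heq := path_eq hacyc hp hq
        exact hqe _ (heq ▸ h1) rfl
      · intro hr
        obtain ⟨q, hq, hqe⟩ := (reach_del_iff _).mp hr
        have heq := path_eq hacyc hp hq
        exact hqe _ (heq ▸ h2) rfl
    · rintro ⟨h1, h2⟩
      obtain ⟨w⟩ := hpre a d
      refine ⟨w.bypass, w.bypass_isPath, ?_, ?_⟩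
      · by_contra hmem
        exact h1 ((reach_del_iff _).mpr ⟨w.bypass, w.bypass_isPath,
          fun e he hm => hmem (by rwa [Set.mem_singleton_iff.mp hm] at he)⟩)
      · by_contra hmem
        exact h2 ((reach_del_iff _).mpr ⟨w.bypass, w.bypass_isPath,
          fun e he hm => hmem (by rwa [Set.mem_singleton_iff.mp hm] at he)⟩)
  have hsep2 : (∃ p : T.Walk b c, p.IsPath ∧ s(a, b) ∈ p.edges ∧ s(c, d) ∈ p.edges) ↔
      (¬(T.deleteEdges {s(a, b)}).Reachable b c ∧
       ¬(T.deleteEdges {s(c, d)}).Reachable b c) := by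
    constructor
    · rintro ⟨p, hp, h1, h2⟩
      constructor
      · intro hr
        obtain ⟨q, hq, hqe⟩ := (reach_del_iff _).mp hr
        have heq := path_eq hacyc hp hq
        exact hqe _ (heq ▸ h1) rfl
      · intro hr
        obtain ⟨q, hq, hqe⟩ := (reach_del_iff _).mp hr
        have heq := path_eq hacyc hp hq
        exact hqe _ (heq ▸ h2) rfl
    · rintro ⟨h1, h2⟩
      obtain ⟨w⟩ := hpre b c
      refine ⟨w.bypass, w.bypass_isPath, ?_, ?_⟩
      · by_contra hmem
        exact h1 ((reach_del_iff _).mpr ⟨w.bypass, w.bypass_isPath,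
          fun e he hm => hmem (by rwa [Set.mem_singleton_iff.mp hm] at he)⟩)
      · by_contra hmem
        exact h2 ((reach_del_iff _).mpr ⟨w.bypass, w.bypass_isPath,
          fun e he hm => hmem (by rwa [Set.mem_singleton_iff.mp hm] at he)⟩)
  -- exclusivity
  have hexcl : ¬(H.Reachable b c ∧ H.Reachable a d) := by
    rintro ⟨hbc', had'⟩
    have hbcc := hbc'
    obtain ⟨w0⟩ := hbcc
    have hp0 : w0.bypass.IsPath := w0.bypass_isPath
    have hsubT : ∀ e ∈ w0.bypass.edges, e ∈ T.edgeSet := by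
      intro e he
      have hmem := w0.bypass.edges_subset_edgeSet he
      rw [hH, edgeSet_deleteEdges] at hmem
      exact hmem.1
    set p : T.Walk b c := w0.bypass.transfer T hsubT with hpdef
    have hpsupp : p.support = w0.bypass.support := Walk.support_transfer _ _
    have hppath : p.IsPath := hp0.transfer _
    have hanot : a ∉ p.support := by
      rw [hpsupp]
      intro hmem
      exact hnRab ((w0.bypass.takeUntil a hmem).reachable).symm
    have hdnot : d ∉ p.support := by
      rw [hpsupp]
      intro hmem
      exact hnRcd (hbc'.symm.trans (w0.bypass.takeUntil d hmem).reachable)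
    set q : T.Walk a d := Walk.cons hAB (p.concat hCD) with hqdef
    have hq : q.IsPath := by
      have h1 : (p.support ++ [d]).Nodup := by
        rw [List.nodup_append]
        refine ⟨hppath.support_nodup, List.nodup_singleton _, ?_⟩
        intro x hx hxd' hxd
        rw [List.mem_singleton] at hxd
        subst hxd
        exact fun h => hdnot (h ▸ hx)
      rw [Walk.isPath_def, hqdef, Walk.support_cons, Walk.support_concat]
      refine List.nodup_cons.mpr ⟨?_, h1⟩
      intro hmem
      rcases List.mem_append.mp hmem with hmm | hmm
      · exact hanot hmm
      · exact had (List.mem_singleton.mp hmm)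
    have h1 : s(a, b) ∈ q.edges := by
      rw [hqdef, Walk.edges_cons]
      exact List.mem_cons_self
    have hr1 : (T.deleteEdges {s(a, b)}).Reachable a d := had'.mono hle1
    obtain ⟨q', hq', hq'e⟩ := (reach_del_iff _).mp hr1
    have heq := path_eq hacyc hq hq'
    exact hq'e _ (heq ▸ h1) rfl
  -- adjacency in the switched graph
  have hG2adj : ∀ u w : V, G2.Adj u w ↔
      (H.Adj u w ∨ s(u, w) = s(a, c) ∨ s(u, w) = s(b, d)) := by
    intro u w
    rw [hG2]
    unfold twoSwitch
    rw [fromEdgeSet_adj]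
    constructor
    · rintro ⟨hm, hne⟩
      rcases hm with ⟨hmem, hnot⟩ | hm
      · left
        rw [hH, deleteEdges_adj]
        exact ⟨(T.mem_edgeSet).mp hmem, hnot⟩
      · right
        simpa using hm
    · intro hm
      rcases hm with hm | hm | hm
      · rw [hH, deleteEdges_adj] at hm
        exact ⟨Or.inl ⟨(T.mem_edgeSet).mpr hm.1, hm.2⟩, hm.1.ne⟩
      · refine ⟨Or.inr (by simp [hm]), ?_⟩
        rcases Sym2.eq_iff.mp hm with ⟨rfl, rfl⟩ | ⟨rfl, rfl⟩
        exacts [hac, hac.symm]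
      · refine ⟨Or.inr (by simp [hm]), ?_⟩
        rcases Sym2.eq_iff.mp hm with ⟨rfl, rfl⟩ | ⟨rfl, rfl⟩
        exacts [hbd, hbd.symm]
  -- every vertex reaches one of a, b, c, d in H
  have hfour : ∀ x : V, H.Reachable a x ∨ H.Reachable b x ∨ H.Reachable c x ∨
      H.Reachable d x := by
    intro x
    have step : ∀ {u w : V}, H.Adj u w →
        (H.Reachable a u ∨ H.Reachable b u ∨ H.Reachable c u ∨ H.Reachable d u) →
        (H.Reachable a w ∨ H.Reachable b w ∨ H.Reachable c w ∨ H.Reachable d w) := by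
      rintro u w hadj (hh | hh | hh | hh)
      exacts [Or.inl (hh.trans hadj.reachable),
        Or.inr (Or.inl (hh.trans hadj.reachable)),
        Or.inr (Or.inr (Or.inl (hh.trans hadj.reachable))),
        Or.inr (Or.inr (Or.inr (hh.trans hadj.reachable)))]
    have key : ∀ ⦃u w : V⦄, T.Adj u w →
        ((H.Reachable a u ∨ H.Reachable b u ∨ H.Reachable c u ∨ H.Reachable d u) ↔
         (H.Reachable a w ∨ H.Reachable b w ∨ H.Reachable c w ∨ H.Reachable d w)) := by
      intro u w huw
      by_cases h1 : s(u, w) = s(a, b)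
      · rcases Sym2.eq_iff.mp h1 with ⟨rfl, rfl⟩ | ⟨rfl, rfl⟩
        · exact iff_of_true (Or.inl (Reachable.refl _)) (Or.inr (Or.inl (Reachable.refl _)))
        · exact iff_of_true (Or.inr (Or.inl (Reachable.refl _))) (Or.inl (Reachable.refl _))
      · by_cases h2 : s(u, w) = s(c, d)
        · rcases Sym2.eq_iff.mp h2 with ⟨rfl, rfl⟩ | ⟨rfl, rfl⟩
          · exact iff_of_true (Or.inr (Or.inr (Or.inl (Reachable.refl _))))
              (Or.inr (Or.inr (Or.inr (Reachable.refl _))))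
          · exact iff_of_true (Or.inr (Or.inr (Or.inr (Reachable.refl _))))
              (Or.inr (Or.inr (Or.inl (Reachable.refl _))))
        · have hadj : H.Adj u w := by
            rw [hH, deleteEdges_adj]
            refine ⟨huw, ?_⟩
            intro hmem
            rcases hmem with hmm | hmm
            · exact h1 hmm
            · exact h2 hmm
          exact ⟨step hadj, step hadj.symm⟩
    exact (reach_invar _ key (hpre a x)).mp (Or.inl (Reachable.refl _))
  have hHle : H ≤ G2 := fun u w hw => (hG2adj u w).mpr (Or.inl hw)
  have hacG2 : G2.Adj a c := (hG2adj a c).mpr (Or.inr (Or.inl rfl))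
  have hbdG2 : G2.Adj b d := (hG2adj b d).mpr (Or.inr (Or.inr rfl))
  -- connectivity of G2 from either reachability
  have conn_of : (H.Reachable b c ∨ H.Reachable a d) → G2.Connected := by
    intro hcase
    haveI : Nonempty V := ⟨a⟩
    have hab2 : G2.Reachable a b ∧ G2.Reachable a c ∧ G2.Reachable a d := by
      rcases hcase with hh | hh
      · have hrb : G2.Reachable a b := hacG2.reachable.trans ((hh.mono hHle).symm)
        exact ⟨hrb, hacG2.reachable, hrb.trans hbdG2.reachable⟩
      · have hrd : G2.Reachable a d := hh.mono hHle
        exact ⟨hrd.trans hbdG2.symm.reachable, hacG2.reachable, hrd⟩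
    refine Connected.mk fun x y => ?_
    have hax : ∀ z : V, G2.Reachable a z := by
      intro z
      rcases hfour z with hh | hh | hh | hh
      exacts [hh.mono hHle, hab2.1.trans (hh.mono hHle), hab2.2.1.trans (hh.mono hHle),
        hab2.2.2.trans (hh.mono hHle)]
    exact (hax x).symm.trans (hax y)
  -- disconnectedness of G2 otherwise
  have disc_of : ¬H.Reachable b c → ¬H.Reachable a d → ¬G2.Connected := by
    intro h1 h2 hcn
    have key : ∀ ⦃u w : V⦄, G2.Adj u w →
        ((H.Reachable a u ∨ H.Reachable c u) ↔ (H.Reachable a w ∨ H.Reachable c w)) := by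
      intro u w hadj
      rcases (hG2adj u w).mp hadj with hH' | he | he
      · exact ⟨fun hh => hh.imp (·.trans hH'.reachable) (·.trans hH'.reachable),
               fun hh => hh.imp (·.trans hH'.symm.reachable) (·.trans hH'.symm.reachable)⟩
      · rcases Sym2.eq_iff.mp he with ⟨rfl, rfl⟩ | ⟨rfl, rfl⟩
        · exact iff_of_true (Or.inl (Reachable.refl _)) (Or.inr (Reachable.refl _))
        · exact iff_of_true (Or.inr (Reachable.refl _)) (Or.inl (Reachable.refl _))
      · rcases Sym2.eq_iff.mp he with ⟨rfl, rfl⟩ | ⟨rfl, rfl⟩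
        · refine iff_of_false ?_ ?_
          · rintro (hh | hh)
            exacts [hnRab hh, h1 hh.symm]
          · rintro (hh | hh)
            exacts [h2 hh, hnRcd hh]
        · refine iff_of_false ?_ ?_
          · rintro (hh | hh)
            exacts [h2 hh, hnRcd hh]
          · rintro (hh | hh)
            exacts [hnRab hh, h1 hh.symm]
    have := (reach_invar _ key (hcn.preconnected a b)).mp (Or.inl (Reachable.refl _))
    rcases this with hh | hh
    exacts [hnRab hh, h1 hh.symm]
  -- edge counting
  haveI : Fintype T.edgeSet := (Set.toFinite _).fintype
  haveI : Fintype G2.edgeSet := (Set.toFinite _).fintype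
  have hedgeset : G2.edgeSet = (T.edgeSet \ {s(a, b), s(c, d)}) ∪ {s(a, c), s(b, d)} := by
    rw [hG2]
    unfold twoSwitch
    rw [edgeSet_fromEdgeSet]
    rw [sdiff_eq_self_iff_disjoint]
    rw [Set.disjoint_left]
    rintro e hdiag hmem
    rcases hmem with ⟨hmm, _⟩ | hmm
    · exact T.not_isDiag_of_mem_edgeSet hmm hdiag
    · rcases hmm with hmm | hmm
      · subst hmm
        exact hac (Sym2.mk_isDiag_iff.mp hdiag)
      · rw [Set.mem_singleton_iff] at hmm
        subst hmm
        exact hbd (Sym2.mk_isDiag_iff.mp hdiag)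
  have hsubE : ({s(a, b), s(c, d)} : Finset (Sym2 V)) ⊆ T.edgeFinset := by
    intro e he
    rcases Finset.mem_insert.mp he with rfl | he
    · exact mem_edgeFinset.mpr hAB
    · rw [Finset.mem_singleton] at he
      subst he
      exact mem_edgeFinset.mpr hCD
  have hG2fin : G2.edgeFinset = (T.edgeFinset \ {s(a, b), s(c, d)}) ∪ {s(a, c), s(b, d)} := by
    ext e
    rw [mem_edgeFinset, hedgeset]
    simp only [mem_edgeFinset, Finset.mem_union, Finset.mem_sdiff, Finset.mem_insert,
      Finset.mem_singleton, Set.mem_union, Set.mem_diff, Set.mem_insert_iff,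
      Set.mem_singleton_iff]
  have hcardG2 : G2.edgeFinset.card = T.edgeFinset.card := by
    rw [hG2fin, Finset.card_union_of_disjoint, Finset.card_sdiff_of_subset hsubE]
    · have h2 : ({s(a, b), s(c, d)} : Finset (Sym2 V)).card = 2 := by
        rw [Finset.card_insert_of_notMem (by simp [hne12]), Finset.card_singleton]
      have h4 : ({s(a, c), s(b, d)} : Finset (Sym2 V)).card = 2 := by
        rw [Finset.card_insert_of_notMem (by simp [hne34]), Finset.card_singleton]
      have hle' := Finset.card_le_card hsubE
      rw [h2] at hle' ⊢
      rw [h4]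
      omega
    · simp only [Finset.disjoint_right, Finset.mem_insert, Finset.mem_singleton,
        Finset.mem_sdiff, mem_edgeFinset]
      rintro e (rfl | rfl) ⟨hmem, _⟩
      exacts [hnAC ((T.mem_edgeSet).mp hmem), hnBD ((T.mem_edgeSet).mp hmem)]
  -- final assembly
  constructor
  · intro htree
    have hcn := htree.isConnected
    by_cases hbc' : H.Reachable b c
    · refine Or.inl (hsep1.mpr ⟨F1.mpr ⟨?_, ?_⟩, F2.mpr ⟨?_, ?_⟩⟩)
      · exact fun hh => hexcl ⟨hbc', hh⟩
      · exact fun hh => hnRab (hh.trans hbc'.symm)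
      · exact fun hh => hexcl ⟨hbc', hh⟩
      · exact fun hh => hnRcd (hbc'.symm.trans hh)
    · by_cases had' : H.Reachable a d
      · refine Or.inr (hsep2.mpr ⟨F3.mpr ⟨hbc', ?_⟩, F4.mpr ⟨hbc', ?_⟩⟩)
        · exact fun hh => hnRab (had'.trans hh.symm)
        · exact fun hh => hnRcd (hh.symm.trans had')
      · exact absurd hcn (disc_of hbc' had')
  · rintro (hx | hx)
    · obtain ⟨hn1, hn2⟩ := hsep1.mp hx
      obtain ⟨hnad, hnac⟩ := F1.mp hn1
      obtain ⟨_, hnbd⟩ := F2.mp hn2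
      have hR1bd : (T.deleteEdges {s(a, b)}).Reachable b d :=
        (dichotomy hpre a b d).resolve_left hn1
      have hbc' : H.Reachable b c := by
        rcases (hd1 b d).mp hR1bd with hh | ⟨h1, h2⟩ | ⟨h1, h2⟩
        exacts [absurd hh hnbd, h1, absurd h1 hnbd]
      exact isTree_of_connected_of_card G2 (conn_of (Or.inl hbc'))
        (by rw [hcardG2]; exact hT.card_edgeFinset)
    · obtain ⟨hn1, hn2⟩ := hsep2.mp hx
      obtain ⟨hnbc, hnbd⟩ := F3.mp hn1
      obtain ⟨_, hnac⟩ := F4.mp hn2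
      have hR2da : (T.deleteEdges {s(c, d)}).Reachable d a := by
        refine (dichotomy hpre c d a).resolve_left ?_
        intro hr
        rcases (hd2 c a).mp hr with hh | ⟨h1, h2⟩ | ⟨h1, h2⟩
        · exact hnac hh.symm
        · exact hnac h1.symm
        · exact hnbc h1.symm
      have had' : H.Reachable a d := by
        rcases (hd2 d a).mp hR2da with hh | ⟨h1, h2⟩ | ⟨h1, h2⟩
        · exact hh.symm
        · exact h1.symm
        · exact absurd h1.symm hnbd
      exact isTree_of_connected_of_card G2 (conn_of (Or.inr had'))
        (by rw [hcardG2]; exact hT.card_edgeFinset)
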